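/- For a single item with geometric horizon with continuation probability q = 1 - 1/μ and the two-point valuation distribution taking value v_L with probability 1-p and v_H with probability p (v_L < v_H), the optimal online algorithm's expected welfare equals max{ v_L(1-p) + v_H p , v_H · p/(1 - q(1-p)) }, while the prophet's expected welfare equals v_H · p/(1 - q(1-p)) + v_L · (1 - p/(1 - q(1-p))). -/

import Mathlib

/-- Probability that a buyer (value v_H w.p. p, v_L otherwise) accepts price x. -/
noncomputable def accProb (p vL vH x : ℝ) : ℝ :=
  if x ≤ vL then 1 else if x ≤ vH then p else 0

/-- Expected welfare gained from one buyer facing price x. -/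
noncomputable def accGain (p vL vH x : ℝ) : ℝ :=
  if x ≤ vL then (1 - p) * vL + p * vH else if x ≤ vH then p * vH else 0

/-- Expected welfare of the pricing policy π (price π t at step t, if the item is
still present and unsold), where the item survives each step with probability q. -/
noncomputable def policyWelfare (q p vL vH : ℝ) (π : ℕ → ℝ) : ℝ :=
  ∑' t : ℕ, q ^ t * (∏ s ∈ Finset.range t, (1 - accProb p vL vH (π s))) *
    accGain p vL vH (π t)

section aux

variable {q p vL vH : ℝ}

noncomputable def wTerm (q p vL vH : ℝ) (π : ℕ → ℝ) (t : ℕ) : ℝ :=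
  q ^ t * (∏ s ∈ Finset.range t, (1 - accProb p vL vH (π s))) * accGain p vL vH (π t)

lemma accProb_nonneg (hp0 : 0 < p) (x : ℝ) : 0 ≤ accProb p vL vH x := by
  unfold accProb; split_ifs <;> linarith

lemma accProb_le_one (hp1 : p < 1) (x : ℝ) : accProb p vL vH x ≤ 1 := by
  unfold accProb; split_ifs <;> linarith

lemma accGain_nonneg (hp0 : 0 < p) (hp1 : p < 1) (hvL : 0 ≤ vL) (hv : vL < vH) (x : ℝ) :
    0 ≤ accGain p vL vH x := by
  unfold accGain; split_ifs <;> nlinarith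

lemma accGain_le (hp0 : 0 < p) (hp1 : p < 1) (hvL : 0 ≤ vL) (hv : vL < vH) (x : ℝ) :
    accGain p vL vH x ≤ (1 - p) * vL + p * vH := by
  unfold accGain; split_ifs <;> nlinarith

lemma wTerm_nonneg (hq0 : 0 ≤ q) (hp0 : 0 < p) (hp1 : p < 1) (hvL : 0 ≤ vL) (hv : vL < vH)
    (π : ℕ → ℝ) (t : ℕ) : 0 ≤ wTerm q p vL vH π t := by
  refine mul_nonneg (mul_nonneg (pow_nonneg hq0 t) ?_) (accGain_nonneg hp0 hp1 hvL hv _)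
  exact Finset.prod_nonneg fun s _ => by linarith [accProb_le_one (vL := vL) (vH := vH) hp1 (π s)]

lemma wTerm_le (hq0 : 0 ≤ q) (hp0 : 0 < p) (hp1 : p < 1) (hvL : 0 ≤ vL) (hv : vL < vH)
    (π : ℕ → ℝ) (t : ℕ) : wTerm q p vL vH π t ≤ q ^ t * ((1 - p) * vL + p * vH) := by
  have hprod : (∏ s ∈ Finset.range t, (1 - accProb p vL vH (π s))) ≤ 1 :=
    Finset.prod_le_one (fun s _ => by linarith [accProb_le_one (vL := vL) (vH := vH) hp1 (π s)])
      (fun s _ => by linarith [accProb_nonneg (vL := vL) (vH := vH) hp0 (π s)])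
  have hprod0 : 0 ≤ ∏ s ∈ Finset.range t, (1 - accProb p vL vH (π s)) :=
    Finset.prod_nonneg fun s _ => by linarith [accProb_le_one (vL := vL) (vH := vH) hp1 (π s)]
  have hg := accGain_le hp0 hp1 hvL hv (x := π t)
  have hg0 := accGain_nonneg hp0 hp1 hvL hv (x := π t)
  have hqt : 0 ≤ q ^ t := pow_nonneg hq0 t
  unfold wTerm
  nlinarith [mul_le_mul_of_nonneg_left hprod hqt]

lemma wTerm_summable (hq0 : 0 ≤ q) (hq1 : q < 1) (hp0 : 0 < p) (hp1 : p < 1)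
    (hvL : 0 ≤ vL) (hv : vL < vH) (π : ℕ → ℝ) : Summable (wTerm q p vL vH π) := by
  refine Summable.of_nonneg_of_le (wTerm_nonneg hq0 hp0 hp1 hvL hv π)
    (wTerm_le hq0 hp0 hp1 hvL hv π) ?_
  exact (summable_geometric_of_lt_one hq0 hq1).mul_right _

lemma wTerm_succ (π : ℕ → ℝ) (t : ℕ) :
    wTerm q p vL vH π (t + 1) =
      q * (1 - accProb p vL vH (π 0)) * wTerm q p vL vH (fun n => π (n + 1)) t := by
  unfold wTerm
  rw [Finset.prod_range_succ']
  ring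

end aux

theorem two_point_geometric_values (q p vL vH : ℝ) (hq0 : 0 ≤ q) (hq1 : q < 1)
    (hp0 : 0 < p) (hp1 : p < 1) (hvL : 0 ≤ vL) (hv : vL < vH) :
    (⨆ π : ℕ → ℝ, policyWelfare q p vL vH π) =
        max (vL * (1 - p) + vH * p) (vH * (p / (1 - q * (1 - p)))) ∧
      (∑' h : ℕ, (1 - q) * q ^ h *
          (vH * (1 - (1 - p) ^ (h + 1)) + vL * (1 - p) ^ (h + 1))) =
        vH * (p / (1 - q * (1 - p))) + vL * (1 - p / (1 - q * (1 - p))) := by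
  have hqp0 : 0 ≤ q * (1 - p) := mul_nonneg hq0 (by linarith)
  have hqp1 : q * (1 - p) < 1 := by nlinarith
  have hD : 0 < 1 - q * (1 - p) := by linarith
  set M : ℝ := max (vL * (1 - p) + vH * p) (vH * (p / (1 - q * (1 - p)))) with hM
  have hM1 : (1 - p) * vL + p * vH ≤ M := by
    have := le_max_left (vL * (1 - p) + vH * p) (vH * (p / (1 - q * (1 - p))))
    linarith
  have hM0 : 0 ≤ M := le_trans (by nlinarith) hM1
  have hM2 : p * vH ≤ (1 - q * (1 - p)) * M := by
    have h2 : vH * (p / (1 - q * (1 - p))) ≤ M := le_max_right _ _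
    have := mul_le_mul_of_nonneg_left h2 hD.le
    calc p * vH = (1 - q * (1 - p)) * (vH * (p / (1 - q * (1 - p)))) := by
          field_simp
      _ ≤ (1 - q * (1 - p)) * M := this
  -- one-step bound
  have hstep : ∀ x : ℝ, accGain p vL vH x + q * (1 - accProb p vL vH x) * M ≤ M := by
    intro x
    unfold accGain accProb
    split_ifs with h1 h2
    · simp; linarith
    · nlinarith
    · nlinarith
  -- partial sums bounded by M
  have hpartial : ∀ N : ℕ, ∀ π : ℕ → ℝ, ∑ t ∈ Finset.range N, wTerm q p vL vH π t ≤ M := by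
    intro N
    induction N with
    | zero => intro π; simpa using hM0
    | succ n ih =>
      intro π
      rw [Finset.sum_range_succ']
      have h0 : wTerm q p vL vH π 0 = accGain p vL vH (π 0) := by
        unfold wTerm; simp
      have hshift : ∀ t, wTerm q p vL vH π (t + 1) =
          q * (1 - accProb p vL vH (π 0)) * wTerm q p vL vH (fun n => π (n + 1)) t :=
        wTerm_succ π
      have : ∑ t ∈ Finset.range n, wTerm q p vL vH π (t + 1) =
          q * (1 - accProb p vL vH (π 0)) *
            ∑ t ∈ Finset.range n, wTerm q p vL vH (fun n => π (n + 1)) t := by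
        rw [Finset.mul_sum]; exact Finset.sum_congr rfl fun t _ => hshift t
      rw [this, h0]
      have hc0 : 0 ≤ q * (1 - accProb p vL vH (π 0)) :=
        mul_nonneg hq0 (by linarith [accProb_le_one (vL := vL) (vH := vH) hp1 (π 0)])
      have := mul_le_mul_of_nonneg_left (ih (fun n => π (n + 1))) hc0
      linarith [hstep (π 0)]
  have hwelfare : ∀ π : ℕ → ℝ, policyWelfare q p vL vH π = ∑' t, wTerm q p vL vH π t :=
    fun π => rfl
  have hub : ∀ π : ℕ → ℝ, policyWelfare q p vL vH π ≤ M := by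
    intro π
    rw [hwelfare]
    exact Summable.tsum_le_of_sum_range_le (wTerm_summable hq0 hq1 hp0 hp1 hvL hv π) (fun n => hpartial n π)
  have hbdd : BddAbove (Set.range fun π : ℕ → ℝ => policyWelfare q p vL vH π) := by
    refine ⟨M, ?_⟩
    rintro x ⟨π, rfl⟩
    exact hub π
  -- value of constant policy vL
  have hL : policyWelfare q p vL vH (fun _ => vL) = vL * (1 - p) + vH * p := by
    rw [hwelfare]
    rw [tsum_eq_single 0]
    · unfold wTerm accGain; simp [le_refl]; ring
    · intro t ht
      unfold wTerm
      have : (∏ s ∈ Finset.range t, (1 - accProb p vL vH vL)) = 0 := by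
        have hacc : accProb p vL vH vL = 1 := by unfold accProb; simp
        rw [hacc]
        simp [Finset.prod_const, zero_pow ht]
      rw [this]; ring
  -- value of constant policy vH
  have hH : policyWelfare q p vL vH (fun _ => vH) = vH * (p / (1 - q * (1 - p))) := by
    rw [hwelfare]
    have hacc : accProb p vL vH vH = p := by unfold accProb; simp [not_le.mpr hv]
    have hgain : accGain p vL vH vH = p * vH := by unfold accGain; simp [not_le.mpr hv]
    have hterm : ∀ t, wTerm q p vL vH (fun _ => vH) t = (q * (1 - p)) ^ t * (p * vH) := by
      intro t
      simp only [wTerm]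
      rw [hacc, hgain, Finset.prod_const, mul_pow]
      simp [Finset.card_range]
    rw [tsum_congr hterm, tsum_mul_right, tsum_geometric_of_lt_one hqp0 hqp1]
    field_simp
  constructor
  · apply le_antisymm (ciSup_le hub)
    apply max_le
    · rw [← hL]; exact le_ciSup hbdd (fun _ => vL)
    · rw [← hH]; exact le_ciSup hbdd (fun _ => vH)
  · -- prophet value
    have hterm : ∀ h : ℕ, (1 - q) * q ^ h *
        (vH * (1 - (1 - p) ^ (h + 1)) + vL * (1 - p) ^ (h + 1)) =
        ((1 - q) * vH) * q ^ h - ((1 - q) * (vH - vL) * (1 - p)) * (q * (1 - p)) ^ h := by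
      intro h
      rw [pow_succ, mul_pow]
      ring
    rw [tsum_congr hterm,
      Summable.tsum_sub ((summable_geometric_of_lt_one hq0 hq1).mul_left _)
        ((summable_geometric_of_lt_one hqp0 hqp1).mul_left _),
      tsum_mul_left, tsum_mul_left, tsum_geometric_of_lt_one hq0 hq1,
      tsum_geometric_of_lt_one hqp0 hqp1]
    have hq1' : (1 : ℝ) - q ≠ 0 := by linarith
    field_simp
    ring
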